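/- For β ∈ (0, 1/2), setting γ̂_sc = 2β + 1/(2β), one has ∫_{-2}^{2} log(γ̂_sc - x) dν_sc(x) · (−1/2) + β·γ̂_sc − (1 + log(2β))/2 = β². -/

import Mathlib

open MeasureTheory

open Real Set intervalIntegral

noncomputable def Phi (γ x : ℝ) : ℝ :=
  γ * Real.arcsin (x/2) - Real.sqrt (4 - x^2)
    + Real.sqrt (γ^2 - 4) * Real.arcsin ((4 - γ*x)/(2*(γ-x)))

lemma phi_deriv {γ x : ℝ} (hγ : 2 < γ) (hx : x ∈ Set.Ioo (-2:ℝ) 2) :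
    HasDerivAt (fun x => Phi γ x) (Real.sqrt (4 - x^2)/(γ - x)) x := by
  obtain ⟨hx1, hx2⟩ := hx
  have hγx : 0 < γ - x := by linarith
  have h4x : 0 < 4 - x^2 := by nlinarith
  have hs : 0 < Real.sqrt (4 - x^2) := Real.sqrt_pos.mpr h4x
  have hc2 : 0 < γ^2 - 4 := by nlinarith
  have hc : 0 < Real.sqrt (γ^2 - 4) := Real.sqrt_pos.mpr hc2
  -- derivative of arcsin(x/2)
  have h1 : HasDerivAt (fun x : ℝ => Real.arcsin (x/2))
      (1 / Real.sqrt (1 - (x/2)^2) * (1/2)) x := by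
    have := (Real.hasDerivAt_arcsin (x := x/2) (by nlinarith) (by nlinarith)).comp x
      ((hasDerivAt_id x).div_const 2)
    exact this.congr_deriv (by simp)
  -- derivative of sqrt(4-x^2)
  have h2 : HasDerivAt (fun x : ℝ => Real.sqrt (4 - x^2))
      (-(2*x) / (2 * Real.sqrt (4 - x^2))) x := by
    have hinner : HasDerivAt (fun x : ℝ => 4 - x^2) (-(2*x)) x := by
      simpa using ((hasDerivAt_pow 2 x).const_sub 4)
    have := (Real.hasDerivAt_sqrt (ne_of_gt h4x)).comp x hinner
    refine this.congr_deriv ?_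
    field_simp
  -- derivative of φ = (4-γx)/(2(γ-x))
  set φ : ℝ → ℝ := fun x => (4 - γ*x)/(2*(γ-x)) with hφdef
  have hφx : φ x = (4 - γ*x)/(2*(γ-x)) := rfl
  have h1φ : 1 - (φ x)^2 = (γ^2-4)*(4-x^2)/(2*(γ-x))^2 := by
    rw [hφx]; field_simp; ring
  have h1φpos : 0 < 1 - (φ x)^2 := by rw [h1φ]; positivity
  have h3 : HasDerivAt φ (-(γ^2-4)/(2*(γ-x)^2)) x := by
    have hnum : HasDerivAt (fun x : ℝ => 4 - γ*x) (-γ) x := by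
      simpa using ((hasDerivAt_id x).const_mul γ).const_sub 4
    have hden : HasDerivAt (fun x : ℝ => 2*(γ-x)) (-2) x := by
      have : HasDerivAt (fun x : ℝ => γ - x) (-1) x := by
        simpa using (hasDerivAt_id x).const_sub γ
      simpa using this.const_mul 2
    have := hnum.div hden (by positivity)
    refine this.congr_deriv ?_
    field_simp
    ring
  have h4 : HasDerivAt (fun x => Real.arcsin (φ x))
      (1 / Real.sqrt (1 - (φ x)^2) * (-(γ^2-4)/(2*(γ-x)^2))) x := by
    have harg1 : φ x ≠ -1 := by nlinarith [sq_nonneg (φ x + 1), h1φpos]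
    have harg2 : φ x ≠ 1 := by nlinarith [sq_nonneg (φ x - 1), h1φpos]
    exact (Real.hasDerivAt_arcsin harg1 harg2).comp x h3
  have hD : HasDerivAt (fun x => Phi γ x)
      (γ * (1 / Real.sqrt (1 - (x/2)^2) * (1/2)) - (-(2*x) / (2 * Real.sqrt (4 - x^2)))
        + Real.sqrt (γ^2-4) * (1 / Real.sqrt (1 - (φ x)^2) * (-(γ^2-4)/(2*(γ-x)^2)))) x :=
    ((h1.const_mul γ).sub h2).add (h4.const_mul _)
  convert hD using 1
  -- simplify the sqrt expressions
  have e1 : Real.sqrt (1 - (x/2)^2) = Real.sqrt (4 - x^2) / 2 := by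
    rw [show (1 - (x/2)^2) = (4-x^2)/2^2 by ring, Real.sqrt_div (by positivity),
      Real.sqrt_sq (by norm_num : (0:ℝ) ≤ 2)]
  have e2 : Real.sqrt (1 - (φ x)^2)
      = Real.sqrt (γ^2-4) * Real.sqrt (4-x^2) / (2*(γ-x)) := by
    rw [h1φ, Real.sqrt_div (by positivity), Real.sqrt_mul (le_of_lt hc2),
      Real.sqrt_sq (by positivity)]
  rw [e1, e2]
  have hss : Real.sqrt (4-x^2) * Real.sqrt (4-x^2) = 4 - x^2 :=
    Real.mul_self_sqrt (le_of_lt h4x)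
  set S := Real.sqrt (4-x^2) with hS
  set C := Real.sqrt (γ^2-4) with hC
  have t1 : γ * (1 / (S/2) * (1/2)) = γ / S := by
    field_simp
  have t3 : C * (1 / (C*S/(2*(γ-x))) * (-(γ^2-4)/(2*(γ-x)^2)))
      = -((γ^2-4)/((γ-x)*S)) := by
    field_simp
  rw [t1, t3]
  rw [div_eq_iff (ne_of_gt hγx)] at *
  field_simp
  linear_combination hss

lemma phi_cont {γ : ℝ} (hγ : 2 < γ) :
    ContinuousOn (fun x => Phi γ x) (Set.Icc (-2) 2) := by
  have h1 : ∀ x ∈ Set.Icc (-2:ℝ) 2, (2*(γ-x)) ≠ 0 := by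
    intro x hx; have := hx.2; nlinarith
  have hq : ContinuousOn (fun x : ℝ => (4 - γ*x)/(2*(γ-x))) (Set.Icc (-2) 2) :=
    ContinuousOn.div (by fun_prop) (by fun_prop) h1
  unfold Phi
  apply ContinuousOn.add
  · apply ContinuousOn.sub
    · exact continuousOn_const.mul
        (Real.continuous_arcsin.comp (continuous_id.div_const 2)).continuousOn
    · exact (Real.continuous_sqrt.comp (by continuity)).continuousOn
  · exact continuousOn_const.mul (Real.continuous_arcsin.comp_continuousOn hq)

lemma stieltjes {γ : ℝ} (hγ : 2 < γ) :
    ∫ x in (-2:ℝ)..2, Real.sqrt (4-x^2)/(γ-x)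
      = Real.pi * γ - Real.pi * Real.sqrt (γ^2-4) := by
  have hint : IntervalIntegrable (fun x => Real.sqrt (4-x^2)/(γ-x)) volume (-2) 2 := by
    apply ContinuousOn.intervalIntegrable
    apply ContinuousOn.div
    · exact (Real.continuous_sqrt.comp (by continuity)).continuousOn
    · exact (continuous_const.sub continuous_id).continuousOn
    · intro x hx
      rw [Set.uIcc_of_le (by norm_num)] at hx
      have := hx.2; intro h; nlinarith [hx.1]
  have := intervalIntegral.integral_eq_sub_of_hasDeriv_right_of_le (f := fun x => Phi γ x)
    (f' := fun x => Real.sqrt (4-x^2)/(γ-x)) (by norm_num)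
    (phi_cont hγ)
    (fun x hx => (phi_deriv hγ hx).hasDerivWithinAt)
    hint
  rw [this]
  show Phi γ 2 - Phi γ (-2) = _
  have hγ2 : γ - 2 > 0 := by linarith
  have e2 : Phi γ 2 = γ * (Real.pi/2) - Real.sqrt (γ^2-4) * (Real.pi/2) := by
    unfold Phi
    have : (4 - γ*2)/(2*(γ-2)) = -1 := by field_simp; ring
    rw [this, Real.arcsin_neg_one]
    norm_num [Real.arcsin_one]
    ring
  have em2 : Phi γ (-2) = -(γ * (Real.pi/2)) + Real.sqrt (γ^2-4) * (Real.pi/2) := by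
    unfold Phi
    have : (4 - γ*(-2))/(2*(γ-(-2))) = 1 := by
      rw [div_eq_one_iff_eq (by nlinarith)]; ring
    rw [this, Real.arcsin_one]
    norm_num [Real.arcsin_neg_one]
  rw [e2, em2]; ring

lemma mass : ∫ x in (-2:ℝ)..2, Real.sqrt (4-x^2) = 2 * Real.pi := by
  have hint : IntervalIntegrable (fun x : ℝ => Real.sqrt (4-x^2)) volume (-2) 2 :=
    ((Real.continuous_sqrt.comp (by continuity)).continuousOn).intervalIntegrable
  have hderiv : ∀ x ∈ Set.Ioo (-2:ℝ) 2,
      HasDerivAt (fun x : ℝ => x * Real.sqrt (4-x^2)/2 + 2 * Real.arcsin (x/2))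
        (Real.sqrt (4-x^2)) x := by
    intro x hx
    obtain ⟨hx1, hx2⟩ := hx
    have h4x : 0 < 4 - x^2 := by nlinarith
    have hs : 0 < Real.sqrt (4-x^2) := Real.sqrt_pos.mpr h4x
    have hss : Real.sqrt (4-x^2) * Real.sqrt (4-x^2) = 4 - x^2 :=
      Real.mul_self_sqrt (le_of_lt h4x)
    have h2 : HasDerivAt (fun x : ℝ => Real.sqrt (4 - x^2))
        (-(2*x) / (2 * Real.sqrt (4 - x^2))) x := by
      have hinner : HasDerivAt (fun x : ℝ => 4 - x^2) (-(2*x)) x := by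
        simpa using ((hasDerivAt_pow 2 x).const_sub 4)
      have := (Real.hasDerivAt_sqrt (ne_of_gt h4x)).comp x hinner
      refine this.congr_deriv ?_
      field_simp
    have h1 : HasDerivAt (fun x : ℝ => Real.arcsin (x/2))
        (1 / Real.sqrt (1 - (x/2)^2) * (1/2)) x := by
      have := (Real.hasDerivAt_arcsin (x := x/2) (by nlinarith) (by nlinarith)).comp x
        ((hasDerivAt_id x).div_const 2)
      exact this.congr_deriv (by simp)
    have e1 : Real.sqrt (1 - (x/2)^2) = Real.sqrt (4 - x^2) / 2 := by
      rw [show (1 - (x/2)^2) = (4-x^2)/2^2 by ring, Real.sqrt_div (by positivity),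
        Real.sqrt_sq (by norm_num : (0:ℝ) ≤ 2)]
    have hD := (((hasDerivAt_id x).mul h2).div_const 2).add (h1.const_mul 2)
    refine hD.congr_deriv ?_
    rw [e1]
    set S := Real.sqrt (4-x^2)
    simp only [id]
    field_simp
    linear_combination (-1) * hss
  have := intervalIntegral.integral_eq_sub_of_hasDeriv_right_of_le (by norm_num)
    (f := fun x : ℝ => x * Real.sqrt (4-x^2)/2 + 2 * Real.arcsin (x/2))
    (f' := fun x : ℝ => Real.sqrt (4-x^2))
    (by
      apply ContinuousOn.add
      · exact ((continuousOn_id.mul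
          (Real.continuous_sqrt.comp (by continuity)).continuousOn).div_const 2)
      · exact continuousOn_const.mul
          (Real.continuous_arcsin.comp (continuous_id.div_const 2)).continuousOn)
    (fun x hx => (hderiv x hx).hasDerivWithinAt) hint
  rw [this]
  norm_num [Real.arcsin_one, Real.arcsin_neg_one]
  ring

noncomputable def Jsc (u : ℝ) : ℝ :=
  ∫ x in (-2:ℝ)..2, Real.log ((u + 1/u) - x) * ((1/(2*Real.pi)) * Real.sqrt (4 - x^2))

lemma gamma_lb {u : ℝ} (hu0 : 0 < u) (hu1 : u < 1) {x : ℝ} (hx : x ≤ 2) :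
    (1-u)^2/u ≤ u + 1/u - x := by
  have h : u * (1/u) = 1 := by field_simp
  rw [div_le_iff₀ hu0]
  nlinarith [h]

lemma Jsc_deriv {u : ℝ} (hu0 : 0 < u) (hu1 : u < 1) : HasDerivAt Jsc (u - 1/u) u := by
  set ε := min (u/2) ((1-u)/2) with hε
  have hε_pos : 0 < ε := by
    apply lt_min <;> linarith
  set w : ℝ → ℝ := fun x => (1/(2*Real.pi)) * Real.sqrt (4 - x^2) with hw
  have hw_nonneg : ∀ x, 0 ≤ w x := fun x => by positivity
  have hw_le : ∀ x, w x ≤ 1 := by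
    intro x
    have h1 : Real.sqrt (4 - x^2) ≤ 2 := by
      rw [show (2:ℝ) = Real.sqrt 4 by
        rw [show (4:ℝ) = 2^2 by norm_num, Real.sqrt_sq]; norm_num]
      exact Real.sqrt_le_sqrt (by nlinarith)
    have h2 : (1:ℝ)/(2*Real.pi) ≤ 1/2 := by
      apply div_le_div_of_nonneg_left (by norm_num) (by norm_num)
      nlinarith [Real.pi_gt_three]
    calc w x ≤ (1/2) * 2 := by
          apply mul_le_mul h2 h1 (Real.sqrt_nonneg _) (by norm_num)
      _ = 1 := by norm_num
  -- facts about v in the ball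
  have hball : ∀ v ∈ Metric.ball u ε, u/2 < v ∧ v < (1+u)/2 := by
    intro v hv
    rw [Metric.mem_ball, Real.dist_eq, abs_lt] at hv
    constructor
    · have := hv.1
      have h1 : ε ≤ u/2 := min_le_left _ _
      linarith
    · have := hv.2
      have h1 : ε ≤ (1-u)/2 := min_le_right _ _
      linarith
  set δ : ℝ := ((1-u)/2)^2 with hδ
  have hδ_pos : 0 < δ := by
    have h : 0 < 1 - u := by linarith
    positivity
  have harg : ∀ v, u/2 < v → v < (1+u)/2 → ∀ x : ℝ, x ≤ 2 → δ ≤ v + 1/v - x := by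
    intro v hv1 hv2 x hx
    have hv0 : 0 < v := by linarith
    have hvlt1 : v < 1 := by linarith
    have h1 : (1-v)^2/v ≤ v + 1/v - x := gamma_lb hv0 hvlt1 hx
    have h2 : δ ≤ (1-v)^2/v := by
      rw [hδ, le_div_iff₀ hv0]
      nlinarith
    linarith
  have key := intervalIntegral.hasDerivAt_integral_of_dominated_loc_of_deriv_le
    (F := fun v x => Real.log ((v + 1/v) - x) * w x)
    (F' := fun v x => (1 - 1/v^2) / ((v + 1/v) - x) * w x)
    (x₀ := u) (a := -2) (b := 2) (μ := volume)
    (bound := fun _ => (4/u^2) / δ) (Metric.ball_mem_nhds u hε_pos)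
    (by
      filter_upwards with v
      apply Measurable.aestronglyMeasurable
      exact (Real.measurable_log.comp (measurable_const.sub measurable_id)).mul
        (measurable_const.mul (Real.continuous_sqrt.measurable.comp
          (measurable_const.sub (measurable_id.pow measurable_const)))))
    (by
      apply ContinuousOn.intervalIntegrable
      apply ContinuousOn.mul
      · apply ContinuousOn.log
        · fun_prop
        · intro x hx
          rw [Set.uIcc_of_le (by norm_num)] at hx
          have := harg u (by linarith) (by linarith) x hx.2
          intro h; rw [h] at this; linarith
      · fun_prop)
    (by
      apply Measurable.aestronglyMeasurable
      exact (measurable_const.div (measurable_const.sub measurable_id)).mul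
        (measurable_const.mul (Real.continuous_sqrt.measurable.comp
          (measurable_const.sub (measurable_id.pow measurable_const)))))
    (by
      filter_upwards with x hx v hv
      obtain ⟨hv1, hv2⟩ := hball v hv
      have hv0 : 0 < v := by linarith
      have hx2 : x ≤ 2 := by
        rw [Set.uIoc_of_le (by norm_num : (-2:ℝ) ≤ 2)] at hx
        exact hx.2
      have hargv := harg v hv1 hv2 x hx2
      rw [Real.norm_eq_abs, abs_mul, abs_div]
      have h1 : |1 - 1/v^2| ≤ 4/u^2 := by
        rw [abs_le]
        constructor
        · have : 1/v^2 ≤ 4/u^2 := by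
            rw [div_le_div_iff₀ (by positivity) (by positivity)]
            nlinarith
          nlinarith [sq_nonneg u]
        · have h5 : 0 < 1/v^2 := by positivity
          have h6 : (4:ℝ) ≤ 4/u^2 := by
            rw [le_div_iff₀ (by positivity)]
            nlinarith
          linarith
      have h2 : δ ≤ |v + 1/v - x| := le_trans hargv (le_abs_self _)
      have h3 : |1 - 1/v^2| / |v + 1/v - x| ≤ (4/u^2) / δ := by
        apply div_le_div₀ (by positivity) h1 hδ_pos h2
      calc |1 - 1/v^2| / |v + 1/v - x| * |w x| ≤ (4/u^2)/δ * 1 := by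
            apply mul_le_mul h3 _ (abs_nonneg _) (by positivity)
            rw [abs_of_nonneg (hw_nonneg x)]
            exact hw_le x
        _ = (4/u^2)/δ := by ring)
    intervalIntegrable_const
    (by
      filter_upwards with x hx v hv
      obtain ⟨hv1, hv2⟩ := hball v hv
      have hv0 : 0 < v := by linarith
      have hx2 : x ≤ 2 := by
        rw [Set.uIoc_of_le (by norm_num : (-2:ℝ) ≤ 2)] at hx
        exact hx.2
      have hargv := harg v hv1 hv2 x hx2
      have hinner : HasDerivAt (fun v : ℝ => (v + 1/v) - x) (1 - 1/v^2) v := by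
        have h1 : HasDerivAt (fun v : ℝ => v + 1/v) (1 + (-(1/v^2))) v := by
          have := (hasDerivAt_id v).add (hasDerivAt_inv (ne_of_gt hv0))
          simpa [one_div, inv_pow, Pi.add_def] using this
        have := h1.sub_const x
        exact this.congr_deriv (by ring)
      exact (hinner.log (by linarith)).mul_const (w x))
  obtain ⟨-, hd⟩ := key
  have : Jsc = fun v => ∫ x in (-2:ℝ)..2, Real.log ((v + 1/v) - x) * w x := rfl
  rw [this]
  refine hd.congr_deriv ?_
  -- compute the integral of F' u
  have hrw : ∀ x : ℝ, (1 - 1/u^2) / ((u + 1/u) - x) * w x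
      = ((1 - 1/u^2) * (1/(2*Real.pi))) * (Real.sqrt (4-x^2) / ((u + 1/u) - x)) := by
    intro x
    rw [hw]
    ring
  rw [intervalIntegral.integral_congr (fun x _ => hrw x), intervalIntegral.integral_const_mul,
    stieltjes (by
      have h0 : 0 < 1 - u := by linarith
      have h1 : 0 < (1-u)^2/u := by positivity
      have := gamma_lb hu0 hu1 (le_refl 2)
      linarith)]
  have hc : Real.sqrt ((u + 1/u)^2 - 4) = 1/u - u := by
    rw [show (u + 1/u)^2 - 4 = (1/u - u)^2 by field_simp; ring]
    exact Real.sqrt_sq (by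
      rw [le_sub_iff_add_le, zero_add, le_div_iff₀ hu0]
      nlinarith)
  rw [hc]
  have hπ : Real.pi ≠ 0 := Real.pi_ne_zero
  field_simp
  ring

lemma mass_w : ∫ x in (-2:ℝ)..2, (1/(2*Real.pi)) * Real.sqrt (4 - x^2) = 1 := by
  rw [intervalIntegral.integral_const_mul, mass]
  field_simp

lemma Jsc_plus_log_bound {v : ℝ} (hv0 : 0 < v) (hv1 : v < 1) :
    |Jsc v + Real.log v| ≤ -2 * Real.log (1-v) := by
  set w : ℝ → ℝ := fun x => (1/(2*Real.pi)) * Real.sqrt (4 - x^2) with hw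
  have hw_nonneg : ∀ x, 0 ≤ w x := fun x => by positivity
  have hwcont : Continuous w := by
    apply continuous_const.mul
    exact Real.continuous_sqrt.comp (by continuity)
  have hpos : ∀ x ∈ Set.uIcc (-2:ℝ) 2, 0 < (v + 1/v) - x := by
    intro x hx
    rw [Set.uIcc_of_le (by norm_num)] at hx
    have h1 := gamma_lb hv0 hv1 hx.2
    have h0 : 0 < 1 - v := by linarith
    have : 0 < (1-v)^2/v := by positivity
    linarith
  have hint1 : IntervalIntegrable (fun x => Real.log ((v + 1/v) - x) * w x) volume (-2) 2 := by
    apply ContinuousOn.intervalIntegrable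
    apply ContinuousOn.mul
    · apply ContinuousOn.log
      · fun_prop
      · exact fun x hx => ne_of_gt (hpos x hx)
    · exact hwcont.continuousOn
  have hint2 : IntervalIntegrable (fun x => Real.log v * w x) volume (-2) 2 :=
    (continuous_const.mul hwcont).intervalIntegrable _ _
  have hJ : Jsc v + Real.log v = ∫ x in (-2:ℝ)..2, Real.log (v^2 + 1 - v*x) * w x := by
    have : ∀ x ∈ Set.uIcc (-2:ℝ) 2,
        Real.log (v^2 + 1 - v*x) * w x
          = Real.log ((v + 1/v) - x) * w x + Real.log v * w x := by
      intro x hx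
      have h1 := hpos x hx
      rw [show v^2 + 1 - v*x = ((v + 1/v) - x) * v by field_simp,
        Real.log_mul (ne_of_gt h1) (ne_of_gt hv0)]
      ring
    rw [intervalIntegral.integral_congr this, intervalIntegral.integral_add hint1 hint2,
      intervalIntegral.integral_const_mul]
    unfold Jsc
    rw [show (∫ x in (-2:ℝ)..2, w x) = 1 from mass_w]
    ring
  rw [hJ]
  have hM0 : 0 ≤ -2 * Real.log (1-v) := by
    have : Real.log (1-v) ≤ 0 := Real.log_nonpos (by linarith) (by linarith)
    linarith
  have hbound : ∀ᵐ x ∂(volume.restrict (Set.uIoc (-2:ℝ) 2)),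
      ‖Real.log (v^2 + 1 - v*x) * w x‖ ≤ (-2 * Real.log (1-v)) * w x := by
    apply ae_restrict_of_forall_mem measurableSet_uIoc
    intro x hx
    rw [Set.uIoc_of_le (by norm_num : (-2:ℝ) ≤ 2)] at hx
    obtain ⟨hx1, hx2⟩ := hx
    have hlb : (1-v)^2 ≤ v^2 + 1 - v*x := by nlinarith
    have hub : v^2 + 1 - v*x ≤ (1+v)^2 := by nlinarith
    have h0 : (0:ℝ) < (1-v)^2 := by
      have : 0 < 1 - v := by linarith
      positivity
    have hlog_ub : Real.log (v^2 + 1 - v*x) ≤ -2 * Real.log (1-v) := by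
      calc Real.log (v^2 + 1 - v*x) ≤ Real.log ((1+v)^2) :=
            Real.log_le_log (by linarith) hub
        _ = 2 * Real.log (1+v) := by
            rw [Real.log_pow]; norm_num
        _ ≤ -2 * Real.log (1-v) := by
            have : Real.log (1+v) + Real.log (1-v) ≤ 0 := by
              rw [← Real.log_mul (by linarith) (by linarith)]
              apply Real.log_nonpos <;> nlinarith
            linarith
    have hlog_lb : 2 * Real.log (1-v) ≤ Real.log (v^2 + 1 - v*x) := by
      calc 2 * Real.log (1-v) = Real.log ((1-v)^2) := by
            rw [Real.log_pow]; norm_num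
        _ ≤ Real.log (v^2 + 1 - v*x) := Real.log_le_log h0 hlb
    have habs : |Real.log (v^2 + 1 - v*x)| ≤ -2 * Real.log (1-v) := by
      rw [abs_le]
      constructor
      · have : Real.log (1-v) ≤ 0 := Real.log_nonpos (by linarith) (by linarith)
        linarith
      · exact hlog_ub
    rw [norm_mul, Real.norm_eq_abs, Real.norm_eq_abs, abs_of_nonneg (hw_nonneg x)]
    exact mul_le_mul_of_nonneg_right habs (hw_nonneg x)
  have hgint : IntervalIntegrable (fun x => (-2 * Real.log (1-v)) * w x) volume (-2) 2 :=
    (continuous_const.mul hwcont).intervalIntegrable _ _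
  calc |∫ x in (-2:ℝ)..2, Real.log (v^2 + 1 - v*x) * w x|
      ≤ |∫ x in (-2:ℝ)..2, (-2 * Real.log (1-v)) * w x| := by
        have := intervalIntegral.norm_integral_le_abs_of_norm_le
          (f := fun x => Real.log (v^2 + 1 - v*x) * w x)
          (g := fun x => (-2 * Real.log (1-v)) * w x) (μ := volume)
          (a := -2) (b := 2) hbound hgint
        simpa only [Real.norm_eq_abs] using this
    _ = -2 * Real.log (1-v) := by
        rw [intervalIntegral.integral_const_mul,
          show (∫ x in (-2:ℝ)..2, w x) = 1 from mass_w, mul_one]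
        exact abs_of_nonneg hM0

lemma Jsc_eq {u : ℝ} (hu0 : 0 < u) (hu1 : u < 1) :
    Jsc u = -Real.log u + u^2/2 := by
  set K : ℝ → ℝ := fun v => Jsc v + Real.log v - v^2/2 with hK
  have hKderiv : ∀ v ∈ Set.Ioo (0:ℝ) 1, HasDerivAt K 0 v := by
    intro v hv
    obtain ⟨hv0, hv1⟩ := hv
    have h1 := (Jsc_deriv hv0 hv1).add (Real.hasDerivAt_log (ne_of_gt hv0))
    have h2 : HasDerivAt (fun v : ℝ => v^2/2) v v := by
      have := (hasDerivAt_pow 2 v).div_const 2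
      exact this.congr_deriv (by simp)
    have := h1.sub h2
    refine this.congr_deriv ?_
    field_simp
    ring
  -- K is constant: K u = K v for 0 < v < u
  have hconst : ∀ v ∈ Set.Ioo (0:ℝ) u, K u = K v := by
    intro v hv
    obtain ⟨hv0, hvu⟩ := hv
    have hsub : Set.Icc v u ⊆ Set.Ioo 0 1 := fun y hy =>
      ⟨lt_of_lt_of_le hv0 hy.1, lt_of_le_of_lt hy.2 hu1⟩
    obtain ⟨c, hc, hceq⟩ := exists_hasDerivAt_eq_slope K (fun _ => 0) hvu
      (fun y hy => ((hKderiv y (hsub hy)).continuousAt).continuousWithinAt)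
      (fun y hy => hKderiv y (hsub (Set.Ioo_subset_Icc_self hy)))
    have : K u - K v = 0 := by
      have h := hceq.symm
      rwa [div_eq_zero_iff, or_iff_left (by intro h'; linarith : u - v ≠ 0)] at h
    linarith
  -- limit as v → 0⁺
  have hKu : K u = 0 := by
    have hbd : ∀ᶠ v in nhdsWithin 0 (Set.Ioi 0),
        |K u| ≤ -2 * Real.log (1-v) + v^2/2 := by
      filter_upwards [Ioo_mem_nhdsGT hu0] with v hv
      rw [hconst v hv]
      have h1 := Jsc_plus_log_bound hv.1 (lt_trans hv.2 hu1)
      calc |K v| = |(Jsc v + Real.log v) - v^2/2| := rfl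
        _ ≤ |Jsc v + Real.log v| + |v^2/2| := abs_sub _ _
        _ ≤ -2 * Real.log (1-v) + v^2/2 := by
            have : |v^2/2| = v^2/2 := abs_of_nonneg (by positivity)
            linarith
    have hlim : Filter.Tendsto (fun v : ℝ => -2 * Real.log (1-v) + v^2/2)
        (nhdsWithin 0 (Set.Ioi 0)) (nhds 0) := by
      have hcont : Continuous (fun v : ℝ => v^2/2) := by continuity
      have h1 : Filter.Tendsto (fun v : ℝ => Real.log (1-v)) (nhds 0) (nhds 0) := by
        have := (Real.continuousAt_log (by norm_num : (1:ℝ) - 0 ≠ 0)).comp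
          (Continuous.continuousAt (by continuity : Continuous (fun v : ℝ => 1 - v)))
        have h2 := this.tendsto
        simpa [Function.comp_def] using h2
      have h2 : Filter.Tendsto (fun v : ℝ => -2 * Real.log (1-v) + v^2/2)
          (nhds 0) (nhds 0) := by
        have := ((h1.const_mul (-2)).add (hcont.tendsto 0))
        simpa using this
      exact h2.mono_left nhdsWithin_le_nhds
    have habs : |K u| ≤ 0 := ge_of_tendsto hlim hbd
    exact abs_eq_zero.mp (le_antisymm habs (abs_nonneg _))
  have : Jsc u + Real.log u - u^2/2 = 0 := hKu
  linarith

theorem stmt_2 (β : ℝ) (hβ0 : 0 < β) (hβ : β < 1/2) :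
    (∫ x in (-2:ℝ)..2, Real.log ((2*β + 1/(2*β)) - x) * ((1/(2*Real.pi)) * Real.sqrt (4 - x^2)))
        * (-(1/2))
      + β * (2*β + 1/(2*β)) - (1 + Real.log (2*β))/2 = β^2 := by
  have hu0 : 0 < 2*β := by linarith
  have hu1 : 2*β < 1 := by linarith
  have hJ : (∫ x in (-2:ℝ)..2,
      Real.log ((2*β + 1/(2*β)) - x) * ((1/(2*Real.pi)) * Real.sqrt (4 - x^2)))
      = Jsc (2*β) := rfl
  rw [hJ, Jsc_eq hu0 hu1]
  have hβne : β ≠ 0 := ne_of_gt hβ0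
  field_simp
  ring
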